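/- Let 𝒜 be an abelian length category and 𝒳 ⊆ 𝒜 a full subcategory. Then the smallest torsion class containing 𝒳 equals Filt(Fac 𝒳), the closure of 𝒳 under quotients followed by closure under finite filtrations. -/

import Mathlib

open CategoryTheory CategoryTheory.Limits

universe v u

attribute [local instance] CategoryTheory.Abelian.hasFiniteBiproducts

variable (C : Type u) [Category.{v} C] [Abelian C]

/-- The right Hom-perpendicular category of a class of objects. -/
def RPerp (X : Set C) : Set C := {Y | ∀ A ∈ X, ∀ f : A ⟶ Y, f = 0}

/-- The left Hom-perpendicular category of a class of objects. -/
def LPerp (X : Set C) : Set C := {Y | ∀ A ∈ X, ∀ f : Y ⟶ A, f = 0}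

/-- A torsion class: a class of objects containing the zero objects and closed under
quotients and extensions. -/
structure IsTorsionClass (T : Set C) : Prop where
  zero_mem : ∀ Z : C, IsZero Z → Z ∈ T
  quot_mem : ∀ ⦃A B : C⦄ (f : A ⟶ B), Epi f → A ∈ T → B ∈ T
  ext_mem : ∀ E : ShortComplex C, E.ShortExact → E.X₁ ∈ T → E.X₃ ∈ T → E.X₂ ∈ T

/-- A torsion-free class: a class of objects containing the zero objects and closed under
subobjects and extensions. -/
structure IsTorsionFreeClass (F : Set C) : Prop where
  zero_mem : ∀ Z : C, IsZero Z → Z ∈ F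
  sub_mem : ∀ ⦃A B : C⦄ (f : A ⟶ B), Mono f → B ∈ F → A ∈ F
  ext_mem : ∀ E : ShortComplex C, E.ShortExact → E.X₁ ∈ F → E.X₃ ∈ F → E.X₂ ∈ F

/-- The smallest torsion class containing a class of objects. -/
def torsClosure (X : Set C) : Set C := ⋂₀ {T | IsTorsionClass C T ∧ X ⊆ T}

/-- The smallest torsion-free class containing a class of objects. -/
def torfClosure (X : Set C) : Set C := ⋂₀ {F | IsTorsionFreeClass C F ∧ X ⊆ F}

/-- `ExtStar U W` is the class of objects `X` admitting a short exact sequence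
`0 → U' → X → W' → 0` with `U' ∈ U` and `W' ∈ W`. -/
def ExtStar (U W : Set C) : Set C :=
  {X | ∃ E : ShortComplex C, E.ShortExact ∧ E.X₁ ∈ U ∧ E.X₃ ∈ W ∧ Nonempty (E.X₂ ≅ X)}

/-- The additive closure of a class of objects: direct summands of finite direct sums. -/
def AddClosure (S : Set C) : Set C :=
  {X | ∃ (n : ℕ) (c : Fin n → C), (∀ i, c i ∈ S) ∧ ∃ f : (⨁ c) ⟶ X, IsSplitEpi f}

/-- Membership in the filtration closure `Filt S`: objects admitting a finite filtration
with subquotients in `AddClosure S`. -/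
inductive FiltMem (S : Set C) : C → Prop
  | of_isZero (X : C) : IsZero X → FiltMem S X
  | ext (E : ShortComplex C) : E.ShortExact → FiltMem S E.X₁ →
      E.X₃ ∈ AddClosure C S → FiltMem S E.X₂
  | of_iso (X Y : C) (e : X ≅ Y) : FiltMem S X → FiltMem S Y

/-- The filtration closure of a class of objects. -/
def Filt (S : Set C) : Set C := {X | FiltMem C S X}

/-- The class of quotients of objects of the additive closure of `S`. -/
def Fac (S : Set C) : Set C := {X | ∃ A ∈ AddClosure C S, ∃ f : A ⟶ X, Epi f}

/-- The class of subobjects of objects of the additive closure of `S`. -/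
def Subm (S : Set C) : Set C := {X | ∃ A ∈ AddClosure C S, ∃ f : X ⟶ A, Mono f}

/-- A wide subcategory: closed under kernels, cokernels and extensions
(and containing the zero objects). -/
structure IsWide (W : Set C) : Prop where
  zero_mem : ∀ Z : C, IsZero Z → Z ∈ W
  ker_mem : ∀ ⦃X Y : C⦄ (f : X ⟶ Y), X ∈ W → Y ∈ W → kernel f ∈ W
  coker_mem : ∀ ⦃X Y : C⦄ (f : X ⟶ Y), X ∈ W → Y ∈ W → cokernel f ∈ W
  ext_mem : ∀ E : ShortComplex C, E.ShortExact → E.X₁ ∈ W → E.X₃ ∈ W → E.X₂ ∈ W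

/-- A brick: a nonzero object all of whose nonzero endomorphisms are invertible
(equivalently, the endomorphism ring is a division ring). -/
def IsBrick (S : C) : Prop := ¬ IsZero S ∧ ∀ f : S ⟶ S, f = 0 ∨ IsIso f

/-- A simple object of the full abelian subcategory determined by a wide subcategory `W`. -/
def IsSimpleIn (W : Set C) (S : C) : Prop :=
  S ∈ W ∧ ¬ IsZero S ∧ ∀ ⦃A : C⦄ (f : A ⟶ S), A ∈ W → Mono f → IsZero A ∨ IsIso f

/-- A Hasse arrow `T → U` in the poset of torsion classes: `U ⊊ T` are adjacent. -/
def IsHasseArrow (T U : Set C) : Prop :=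
  IsTorsionClass C T ∧ IsTorsionClass C U ∧ U ⊂ T ∧
    ∀ V : Set C, IsTorsionClass C V → U ⊆ V → V ⊆ T → V = U ∨ V = T

/-- A Hasse arrow `F → G` in the poset of torsion-free classes: `G ⊊ F` are adjacent. -/
def IsHasseArrowTorf (F G : Set C) : Prop :=
  IsTorsionFreeClass C F ∧ IsTorsionFreeClass C G ∧ G ⊂ F ∧
    ∀ H : Set C, IsTorsionFreeClass C H → G ⊆ H → H ⊆ F → H = G ∨ H = F

/-- The brick label of a Hasse arrow `T → U` of torsion classes:
the unique brick in `U^⊥ ∩ T`. -/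
def IsBrickLabel (T U : Set C) (S : C) : Prop := IsBrick C S ∧ S ∈ RPerp C U ∩ T

/-- The brick label of a Hasse arrow `F → G` of torsion-free classes:
the unique brick in `^⊥G ∩ F`. -/
def IsBrickLabelTorf (F G : Set C) (S : C) : Prop := IsBrick C S ∧ S ∈ LPerp C G ∩ F

/-- The left wide subcategory of a torsion class. -/
def WL (T : Set C) : Set C :=
  {X | X ∈ T ∧ ∀ ⦃Y : C⦄ (g : Y ⟶ X), Y ∈ T → kernel g ∈ T}

/-- The right wide subcategory of a torsion-free class. -/
def WR (F : Set C) : Set C :=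
  {X | X ∈ F ∧ ∀ ⦃Y : C⦄ (f : X ⟶ Y), Y ∈ F → cokernel f ∈ F}

/-- A Serre subcategory of the abelian category given by a wide subcategory `W`:
closed under extensions, subobjects and quotients within `W`. -/
structure IsSerreIn (W S : Set C) : Prop where
  subset : S ⊆ W
  zero_mem : ∀ Z : C, IsZero Z → Z ∈ S
  sub_mem : ∀ ⦃A X : C⦄ (f : A ⟶ X), Mono f → A ∈ W → X ∈ S → A ∈ S
  quot_mem : ∀ ⦃X B : C⦄ (f : X ⟶ B), Epi f → B ∈ W → X ∈ S → B ∈ S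
  ext_mem : ∀ E : ShortComplex C, E.ShortExact → E.X₂ ∈ W →
    E.X₁ ∈ S → E.X₃ ∈ S → E.X₂ ∈ S

/-- A torsion class of the abelian category given by a wide subcategory `W`:
a subclass of `W` containing the zero objects and closed under quotients in `W`
and extensions. -/
structure IsTorsionClassIn (W X : Set C) : Prop where
  subset : X ⊆ W
  zero_mem : ∀ Z : C, IsZero Z → Z ∈ X
  quot_mem : ∀ ⦃A B : C⦄ (f : A ⟶ B), Epi f → A ∈ X → B ∈ W → B ∈ X
  ext_mem : ∀ E : ShortComplex C, E.ShortExact → E.X₁ ∈ X → E.X₃ ∈ X → E.X₂ ∈ X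
section Aux

namespace StmtAux

variable {C}

open CategoryTheory.Abelian ZeroObject

attribute [local instance] Pseudoelement.objectToSort Pseudoelement.homToFun

/-- The kernel short exact sequence of an epimorphism. -/
lemma kernelSES {A B : C} (f : A ⟶ B) [Epi f] :
    (ShortComplex.mk (kernel.ι f) f (kernel.condition f)).ShortExact :=
  ShortComplex.ShortExact.mk'
    (ShortComplex.exact_of_f_is_kernel _ (kernelIsKernel f)) inferInstance inferInstance

lemma iso_mem {T : Set C} (hT : IsTorsionClass C T) {A B : C} (e : A ≅ B) (hA : A ∈ T) : B ∈ T :=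
  hT.quot_mem e.hom inferInstance hA

lemma biproduct_mem {T : Set C} (hT : IsTorsionClass C T) :
    ∀ (n : ℕ) (c : Fin n → C), (∀ i, c i ∈ T) → (⨁ c) ∈ T := by
  intro n
  induction n with
  | zero =>
    intro c _
    refine hT.zero_mem _ ?_
    rw [IsZero.iff_id_eq_zero]
    apply biproduct.hom_ext
    intro j
    exact j.elim0
  | succ n ih =>
    intro c hc
    have hzero : biproduct.ι c 0 ≫ (biproduct.lift fun i : Fin n => biproduct.π c i.succ) = 0 := by
      apply biproduct.hom_ext
      intro j
      simp [biproduct.ι_π_ne _ (Fin.succ_ne_zero j).symm]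
    set E : ShortComplex C := ShortComplex.mk _ _ hzero with hEdef
    have sp : E.Splitting :=
      { r := biproduct.π c 0
        s := biproduct.desc fun i : Fin n => biproduct.ι c i.succ
        f_r := biproduct.ι_π_self c 0
        s_g := by
          apply biproduct.hom_ext
          intro j
          apply biproduct.hom_ext'
          intro i
          by_cases h : i = j
          · subst h; simp [E]
          · have h1 : i.succ ≠ j.succ := fun hh => h (Fin.succ_injective n hh)
            simp [E, biproduct.ι_π_ne _ h1, biproduct.ι_π_ne _ h]
        id := by
          dsimp [E]
          rw [biproduct.lift_desc,
            ← Fin.sum_univ_succ (f := fun j => biproduct.π c j ≫ biproduct.ι c j)]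
          exact biproduct.total }
    have hse : E.ShortExact :=
      ShortComplex.ShortExact.mk' sp.exact (mono_of_mono_fac sp.f_r) (epi_of_epi_fac sp.s_g)
    exact hT.ext_mem E hse (hc 0) (ih _ fun i => hc _)

lemma mem_add_self {S : Set C} {x : C} (hx : x ∈ S) : x ∈ AddClosure C S := by
  refine ⟨1, fun _ => x, fun _ => hx, biproduct.π (fun _ : Fin 1 => x) 0, ⟨⟨?_⟩⟩⟩
  exact { section_ := biproduct.ι (fun _ : Fin 1 => x) 0, id := biproduct.ι_π_self _ 0 }

lemma add_biproduct {S : Set C} {n : ℕ} (c : Fin n → C)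
    (hc : ∀ i, c i ∈ AddClosure C S) : (⨁ c) ∈ AddClosure C S := by
  choose m d hd s hs using hc
  let σ := (i : Fin n) × Fin (m i)
  let e : Fin (Fintype.card σ) ≃ σ := (Fintype.equivFin σ).symm
  refine ⟨Fintype.card σ, fun j => d (e j).1 (e j).2, fun j => hd _ _, ?_⟩
  let t : ∀ i, SplitEpi (s i) := fun i => (hs i).exists_splitEpi.some
  let e₁ : (⨁ fun j => d (e j).1 (e j).2) ≅ ⨁ (fun p : σ => d p.1 p.2) :=
    biproduct.whiskerEquiv (f := fun j => d (e j).1 (e j).2) (g := fun p : σ => d p.1 p.2) e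
      (fun j => Iso.refl _)
  let e₂ : (⨁ fun i : Fin n => ⨁ d i) ≅ ⨁ (fun p : σ => d p.1 p.2) :=
    biproductBiproductIso (fun i => Fin (m i)) d
  refine ⟨e₁.hom ≫ e₂.inv ≫ biproduct.map s,
    ⟨⟨⟨(biproduct.map fun i => (t i).section_) ≫ e₂.hom ≫ e₁.inv, ?_⟩⟩⟩⟩
  simp only [Category.assoc, Iso.inv_hom_id_assoc, Iso.hom_inv_id_assoc]
  apply biproduct.hom_ext
  intro j
  rw [Category.assoc, biproduct.map_π, ← Category.assoc, biproduct.map_π, Category.assoc,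
    (t j).id, Category.comp_id, Category.id_comp]

lemma fac_quot {X : Set C} {A B : C} (hA : A ∈ AddClosure C (Fac C X)) (f : A ⟶ B)
    (hf : Epi f) : B ∈ Fac C X := by
  obtain ⟨n, c, hc, q, hq⟩ := hA
  choose A' hA' p hp using hc
  refine ⟨⨁ A', add_biproduct _ hA', biproduct.map p ≫ q ≫ f, ?_⟩
  haveI := hq
  haveI : ∀ j, Epi (p j) := hp
  haveI := hf
  infer_instance

lemma add_fac_subset (X : Set C) : AddClosure C (Fac C X) ⊆ Fac C X :=
  fun Y hY => fac_quot hY (𝟙 Y) inferInstance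

/-- `Filt (Fac X)` is closed under quotients. -/
lemma filt_quot (X : Set C) {A : C} (hA : FiltMem C (Fac C X) A) :
    ∀ {B : C} (f : A ⟶ B), Epi f → FiltMem C (Fac C X) B := by
  induction hA with
  | of_isZero W hW =>
    intro B f hf
    haveI := hf
    exact FiltMem.of_isZero B (hW.of_epi f)
  | ext E hE h1 h3 ih =>
    intro B p hp
    set f : E.X₁ ⟶ B := E.f ≫ p with hfdef
    have hbot : FiltMem C (Fac C X) (Abelian.image f) :=
      ih (Abelian.factorThruImage f) inferInstance
    have hzero : E.f ≫ (p ≫ cokernel.π f) = 0 := by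
      rw [← Category.assoc, ← hfdef]
      exact cokernel.condition f
    obtain ⟨d, hd'⟩ := CokernelCofork.IsColimit.desc' hE.gIsCokernel (p ≫ cokernel.π f) hzero
    have hd : E.g ≫ d = p ≫ cokernel.π f := hd'
    have hepi : Epi d := by
      haveI := hp
      haveI : Epi (E.g ≫ d) := by
        rw [hd]
        infer_instance
      exact epi_of_epi E.g d
    have htop : cokernel f ∈ AddClosure C (Fac C X) :=
      mem_add_self (fac_quot h3 d hepi)
    exact FiltMem.ext (ShortComplex.mk (kernel.ι (cokernel.π f)) (cokernel.π f)
      (kernel.condition _)) (kernelSES (cokernel.π f)) hbot htop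
  | of_iso Y Z e h ih =>
    intro B f hf
    haveI := hf
    exact ih (e.hom ≫ f) inferInstance

/-- `Filt S` is closed under extensions. -/
lemma filt_ext {S : Set C} : ∀ {Z : C}, FiltMem C S Z →
    ∀ (E : ShortComplex C), E.ShortExact → FiltMem C S E.X₁ → (E.X₃ ≅ Z) →
      FiltMem C S E.X₂ := by
  intro Z hZ
  induction hZ with
  | of_isZero W hW =>
    intro E hE h1 e
    have h3 : IsZero E.X₃ := hW.of_iso e
    have hg : E.g = 0 := h3.eq_zero_of_tgt E.g
    haveI : Mono E.f := hE.mono_f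
    haveI : Epi E.f := hE.exact.epi_f hg
    haveI : IsIso E.f := isIso_of_mono_of_epi E.f
    exact FiltMem.of_iso _ _ (asIso E.f) h1
  | ext E₂ hE₂ h1' h3' ih =>
    intro E hE h1 e
    haveI : Epi E₂.g := hE₂.epi_g
    haveI : Epi E.g := hE.epi_g
    haveI : Mono E.f := hE.mono_f
    set w : E.X₃ ⟶ E₂.X₃ := e.hom ≫ E₂.g with hwdef
    set v : E.X₂ ⟶ E₂.X₃ := E.g ≫ w with hvdef
    haveI hv : Epi v := epi_comp _ _
    have hfv : E.f ≫ v = 0 := by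
      rw [hvdef, ← Category.assoc, E.zero, zero_comp]
    set a : E.X₁ ⟶ kernel v := kernel.lift v E.f hfv with hadef
    have hιg : (kernel.ι v ≫ E.g) ≫ w = 0 := by
      rw [Category.assoc, ← hvdef]
      exact kernel.condition v
    set b : kernel v ⟶ kernel w := kernel.lift w (kernel.ι v ≫ E.g) hιg with hbdef
    have hab : a ≫ b = 0 := by
      rw [← cancel_mono (kernel.ι w)]
      simp [hadef, hbdef, E.zero]
    have hkv := kernelSES v
    -- epi b
    have hsurj : Function.Surjective b := by
      intro y
      obtain ⟨x2, hx2⟩ := Pseudoelement.pseudo_surjective_of_epi E.g (kernel.ι w y)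
      have hvx2 : v x2 = 0 := by
        rw [hvdef, Pseudoelement.comp_apply, hx2, ← Pseudoelement.comp_apply,
          kernel.condition, Pseudoelement.zero_apply]
      obtain ⟨k, hk⟩ := Pseudoelement.pseudo_exact_of_exact hkv.exact x2 hvx2
      refine ⟨k, Pseudoelement.pseudo_injective_of_mono (kernel.ι w) ?_⟩
      rw [← Pseudoelement.comp_apply, kernel.lift_ι, Pseudoelement.comp_apply, hk, hx2]
    haveI hbepi : Epi b := Pseudoelement.epi_of_pseudo_surjective b hsurj
    -- exactness at kernel v
    have hex : (ShortComplex.mk a b hab).Exact := by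
      apply Pseudoelement.exact_of_pseudo_exact
      intro k hk
      have hgk : E.g ((kernel.ι v) k) = 0 := by
        rw [← Pseudoelement.comp_apply, show kernel.ι v ≫ E.g = b ≫ kernel.ι w from
          (kernel.lift_ι _ _ _).symm, Pseudoelement.comp_apply, hk,
          Pseudoelement.apply_zero]
      obtain ⟨x1, hx1⟩ := Pseudoelement.pseudo_exact_of_exact hE.exact _ hgk
      refine ⟨x1, Pseudoelement.pseudo_injective_of_mono (kernel.ι v) ?_⟩
      rw [← Pseudoelement.comp_apply, kernel.lift_ι, hx1]
    have hE' : (ShortComplex.mk a b hab).ShortExact :=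
      ShortComplex.ShortExact.mk' hex (mono_of_mono_fac (kernel.lift_ι v E.f hfv)) hbepi
    -- kernel w ≅ E₂.X₁
    have ekw : kernel w ≅ E₂.X₁ :=
      (kernelIsIsoComp e.hom E₂.g) ≪≫
        IsLimit.conePointUniqueUpToIso (kernelIsKernel E₂.g) hE₂.fIsKernel
    have hK : FiltMem C S (kernel v) := ih (ShortComplex.mk a b hab) hE' h1 ekw
    exact FiltMem.ext (ShortComplex.mk (kernel.ι v) v (kernel.condition v)) hkv hK h3'
  | of_iso Y Z e' h ih =>
    intro E hE h1 e
    exact ih E hE h1 (e ≪≫ e'.symm)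

lemma filt_isTorsionClass (X : Set C) : IsTorsionClass C (Filt C (Fac C X)) where
  zero_mem Z hZ := FiltMem.of_isZero Z hZ
  quot_mem A B f hf hA := filt_quot X hA f hf
  ext_mem E hE h1 h3 := filt_ext h3 E hE h1 (Iso.refl _)

lemma subset_filt (X : Set C) : X ⊆ Filt C (Fac C X) := by
  intro x hx
  have hx' : x ∈ AddClosure C (Fac C X) :=
    mem_add_self ⟨x, mem_add_self hx, 𝟙 x, inferInstance⟩
  have hz : IsZero (0 : C) := isZero_zero C
  refine FiltMem.ext (ShortComplex.mk (0 : (0 : C) ⟶ x) (𝟙 x) (by simp)) ?_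
    (FiltMem.of_isZero _ hz) hx'
  refine ShortComplex.ShortExact.mk' ?_ ?_ inferInstance
  · rw [ShortComplex.exact_iff_mono _ rfl]
    infer_instance
  · exact ⟨fun g h _ => hz.eq_of_tgt g h⟩

lemma filt_subset_tors {X T : Set C} (hT : IsTorsionClass C T) (hXT : X ⊆ T) :
    Filt C (Fac C X) ⊆ T := by
  have hAdd : AddClosure C X ⊆ T := by
    rintro Y ⟨n, c, hc, f, hf⟩
    haveI := hf
    exact hT.quot_mem f inferInstance (biproduct_mem hT n c fun i => hXT (hc i))
  have hFac : Fac C X ⊆ T := by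
    rintro Y ⟨A, hA, f, hf⟩
    exact hT.quot_mem f hf (hAdd hA)
  have hAddFac : AddClosure C (Fac C X) ⊆ T := by
    rintro Y ⟨n, c, hc, f, hf⟩
    haveI := hf
    exact hT.quot_mem f inferInstance (biproduct_mem hT n c fun i => hFac (hc i))
  intro Y hY
  induction hY with
  | of_isZero Z hZ => exact hT.zero_mem Z hZ
  | ext E hE h1 h3 ih => exact hT.ext_mem E hE ih (hAddFac h3)
  | of_iso Y Z e h ih => exact hT.quot_mem e.hom inferInstance ih

end StmtAux

end Aux

/-- The smallest torsion class containing `X` is `Filt (Fac X)`. -/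
theorem stmt_3 [Noetherian C] [Artinian C] (X : Set C) :
    torsClosure C X = Filt C (Fac C X) := by
  apply Set.Subset.antisymm
  · intro Y hY
    exact hY _ ⟨StmtAux.filt_isTorsionClass X, StmtAux.subset_filt X⟩
  · intro Y hY T hT
    exact StmtAux.filt_subset_tors hT.1 hT.2 hY
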